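/- arXiv:1205.0735 — 2 statements merged into one kernel-verified Lean document; each statement's English description precedes it below -/
import Mathlib

section
/- Define integers N(n,k) for n, k ≥ 0 by N(0,0) = 1, N(0,k) = 0 for k ≥ 1, N(n,k) = 0 for k < 0, and the recurrence N(n+1,k) = (n+2k+1)·N(n,k) + (n−2k+3)·N(n,k−1). Let L be the operator sending a function f to the derivative of (sec·f), i.e. L(f)(x) = d/dx (sec(x)·f(x)). Then for every n ≥ 0 and every real x with cos(x) ≠ 0, the n-th iterate of L applied to tan satisfies L^n(tan)(x) = ∑_{k=0}^{⌊(n+1)/2⌋} N(n,k) · tan(x)^{n−2k+1} · sec(x)^{n+2k}. -/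
/-- The coefficients N(n,k): N(0,0)=1, N(0,k)=0 for k ≠ 0 (in particular k ≥ 1 and k < 0),
and N(n+1,k) = (n+2k+1)·N(n,k) + (n−2k+3)·N(n,k−1). -/
def N : ℕ → ℤ → ℤ
  | 0, k => if k = 0 then 1 else 0
  | n + 1, k => ((n : ℤ) + 2 * k + 1) * N n k + ((n : ℤ) - 2 * k + 3) * N n (k - 1)

/-- sec(x) = 1/cos(x). -/
noncomputable def sec (x : ℝ) : ℝ := (Real.cos x)⁻¹

/-- The operator L sending f to the derivative of sec·f. -/
noncomputable def L (f : ℝ → ℝ) : ℝ → ℝ := deriv (fun x => sec x * f x)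

lemma N_neg : ∀ (n : ℕ) (k : ℤ), k < 0 → N n k = 0
  | 0, k, hk => by rw [N, if_neg (by omega)]
  | n+1, k, hk => by rw [N, N_neg n k hk, N_neg n (k-1) (by omega)]; ring

lemma N_high : ∀ (n : ℕ) (k : ℤ), (n : ℤ) + 1 < 2 * k → N n k = 0
  | 0, k, hk => by rw [N, if_neg (by omega)]
  | n+1, k, hk => by
      push_cast at hk
      rw [N, N_high n k (by omega)]
      rcases lt_or_ge ((n:ℤ)+1) (2*(k-1)) with h | h
      · rw [N_high n (k-1) h]; ring
      · have h0 : (n:ℤ) - 2*k + 3 = 0 := by omega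
        rw [h0]; ring

lemma hasDerivAt_sec {x : ℝ} (hx : Real.cos x ≠ 0) :
    HasDerivAt sec (Real.tan x * sec x) x := by
  have h := (Real.hasDerivAt_cos x).inv hx
  refine h.congr_deriv ?_
  rw [Real.tan_eq_sin_div_cos, sec]
  rw [neg_neg, pow_two]
  ring

lemma hasDerivAt_tansec {x : ℝ} (hx : Real.cos x ≠ 0) (a b : ℕ) :
    HasDerivAt (fun y => Real.tan y ^ a * sec y ^ b)
      ((a : ℝ) * Real.tan x ^ (a - 1) * sec x ^ (b + 2)
        + (b : ℝ) * Real.tan x ^ (a + 1) * sec x ^ b) x := by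
  have ht : HasDerivAt Real.tan (sec x ^ 2) x := by
    have := Real.hasDerivAt_tan hx
    simpa [sec, one_div, ← inv_pow] using this
  have h := (ht.fun_pow a).fun_mul ((hasDerivAt_sec hx).fun_pow b)
  refine h.congr_deriv ?_
  cases b with
  | zero => simp
  | succ c => simp only [Nat.add_sub_cancel]; push_cast; ring

lemma step_term (n k : ℕ) (t s : ℝ) :
    (N n k : ℝ) * ((↑(n+1-2*k) : ℝ) * t ^ (n+1-2*k-1) * s ^ (n+1+2*k+2)
      + (↑(n+1+2*k) : ℝ) * t ^ (n+1-2*k+1) * s ^ (n+1+2*k)) =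
    ((n:ℝ) + 2*(k:ℝ) + 1) * (N n k : ℝ) * t ^ (n+1+1-2*k) * s ^ (n+1+2*k)
      + ((n:ℝ) - 2*((k:ℝ)+1) + 3) * (N n ((k:ℤ)+1-1) : ℝ) * t ^ (n+1+1-2*(k+1)) * s ^ (n+1+2*(k+1)) := by
  have harg : (k:ℤ)+1-1 = k := by ring
  rw [harg]
  rcases le_or_gt (2*k) (n+1) with h2 | h2
  · have e1 : n+1-2*k-1 = n+1+1-2*(k+1) := by omega
    have e2 : n+1-2*k+1 = n+1+1-2*k := by omega
    have e4 : n+1+2*k+2 = n+1+2*(k+1) := by omega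
    rw [e1, e2, e4, Nat.cast_sub h2]
    push_cast
    ring
  · rw [N_high n k (by push_cast; omega)]
    push_cast
    ring

lemma key : ∀ (n : ℕ) (x : ℝ), Real.cos x ≠ 0 →
    L^[n] Real.tan x = ∑ k ∈ Finset.range (n + 2),
      (N n k : ℝ) * (Real.tan x ^ (n + 1 - 2 * k) * sec x ^ (n + 2 * k)) := by
  intro n
  induction n with
  | zero =>
    intro x hx
    simp [Finset.sum_range_succ, N]
  | succ n ih =>
    intro x hx
    rw [Function.iterate_succ_apply', L]
    have hne : ∀ᶠ y in nhds x, Real.cos y ≠ 0 :=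
      Real.continuous_cos.continuousAt.eventually_ne hx
    have heq : (fun y => sec y * L^[n] Real.tan y) =ᶠ[nhds x]
        (fun y => ∑ k ∈ Finset.range (n + 2),
          (N n k : ℝ) * (Real.tan y ^ (n + 1 - 2 * k) * sec y ^ (n + 1 + 2 * k))) := by
      filter_upwards [hne] with y hy
      rw [ih y hy, Finset.mul_sum]
      refine Finset.sum_congr rfl fun k _ => ?_
      ring
    rw [heq.deriv_eq]
    have hd : HasDerivAt (fun y => ∑ k ∈ Finset.range (n + 2),
        (N n k : ℝ) * (Real.tan y ^ (n + 1 - 2 * k) * sec y ^ (n + 1 + 2 * k)))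
        (∑ k ∈ Finset.range (n + 2), (N n k : ℝ) *
          ((↑(n + 1 - 2 * k) : ℝ) * Real.tan x ^ (n + 1 - 2 * k - 1) * sec x ^ (n + 1 + 2 * k + 2)
            + (↑(n + 1 + 2 * k) : ℝ) * Real.tan x ^ (n + 1 - 2 * k + 1) * sec x ^ (n + 1 + 2 * k))) x :=
      HasDerivAt.fun_sum fun k _ => (hasDerivAt_tansec hx _ _).const_mul _
    rw [hd.deriv]
    have expand : ∀ k ∈ Finset.range (n + 1 + 2),
        (N (n+1) (k:ℤ) : ℝ) * (Real.tan x ^ (n + 1 + 1 - 2 * k) * sec x ^ (n + 1 + 2 * k)) =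
        ((n:ℝ) + 2*(k:ℝ) + 1) * (N n (k:ℤ) : ℝ) * Real.tan x ^ (n+1+1-2*k) * sec x ^ (n+1+2*k)
          + ((n:ℝ) - 2*(k:ℝ) + 3) * (N n ((k:ℤ)-1) : ℝ) * Real.tan x ^ (n+1+1-2*k) * sec x ^ (n+1+2*k) := by
      intro k _
      rw [N]
      push_cast
      ring
    rw [Finset.sum_congr rfl expand, Finset.sum_add_distrib,
        Finset.sum_range_succ (fun k => ((n:ℝ) + 2*(k:ℝ) + 1) * (N n (k:ℤ) : ℝ) * Real.tan x ^ (n+1+1-2*k) * sec x ^ (n+1+2*k)) (n+2),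
        Finset.sum_range_succ' (fun k => ((n:ℝ) - 2*(k:ℝ) + 3) * (N n ((k:ℤ)-1) : ℝ) * Real.tan x ^ (n+1+1-2*k) * sec x ^ (n+1+2*k)) (n+2)]
    have hz1 : (N n (((n+2 : ℕ)) : ℤ) : ℝ) = 0 := by
      rw [N_high n _ (by push_cast; omega)]; simp
    have hz0 : (N n ((((0:ℕ)) : ℤ) - 1) : ℝ) = 0 := by
      rw [N_neg n _ (by omega)]; simp
    rw [hz1, hz0]
    simp only [mul_zero, zero_mul, add_zero]
    rw [← Finset.sum_add_distrib]
    refine Finset.sum_congr rfl fun k hk => ?_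
    have h := step_term n k (Real.tan x) (sec x)
    push_cast at h ⊢
    simp only [add_sub_cancel_right] at h ⊢
    linear_combination h

theorem iterate_L_tan (n : ℕ) (x : ℝ) (hx : Real.cos x ≠ 0) :
    L^[n] Real.tan x =
      ∑ k ∈ Finset.range ((n + 1) / 2 + 1),
        (N n k : ℝ) * Real.tan x ^ (n + 1 - 2 * k) * sec x ^ (n + 2 * k) := by
  rw [key n x hx]
  rw [show (∑ k ∈ Finset.range (n+2), (N n k : ℝ) * (Real.tan x ^ (n+1-2*k) * sec x ^ (n+2*k)))
      = ∑ k ∈ Finset.range (n+2), (N n k : ℝ) * Real.tan x ^ (n+1-2*k) * sec x ^ (n+2*k)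
      from Finset.sum_congr rfl fun k _ => (mul_assoc _ _ _).symm]
  refine (Finset.sum_subset (Finset.range_subset_range.mpr (by omega)) fun k hk hk2 => ?_).symm
  have hlt : (n:ℤ) + 1 < 2 * (k:ℤ) := by
    simp only [Finset.mem_range] at hk hk2
    omega
  rw [N_high n k hlt]
  simp
end

section
/- Define a sequence of real polynomials Q_n in one variable y by Q_0(y) = 1 and Q_{n+1}(y) = (1 + y^2)·Q_n'(y) + y·Q_n(y), where Q_n' denotes the formal derivative. Then for every natural number n ≥ 0 and every real x with cos(x) ≠ 0, the n-th derivative of the secant function satisfies (d/dx)^n sec(x) = sec(x)·Q_n(tan(x)). -/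
/-- Hoffman's derivative polynomials for secant: Q₀ = 1, Q_{n+1} = (1+y²)·Qₙ' + y·Qₙ. -/
noncomputable def Q : ℕ → Polynomial ℝ
  | 0 => 1
  | n + 1 => (1 + Polynomial.X ^ 2) * Polynomial.derivative (Q n) + Polynomial.X * Q n

theorem iteratedDeriv_sec (n : ℕ) (x : ℝ) (hx : Real.cos x ≠ 0) :
    deriv^[n] (fun y => (Real.cos y)⁻¹) x =
      (Real.cos x)⁻¹ * (Q n).eval (Real.tan x) := by
  induction n generalizing x with
  | zero => simp [Q]
  | succ n ih =>
    rw [Function.iterate_succ_apply']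
    have hcont : ∀ᶠ y in nhds x, Real.cos y ≠ 0 :=
      Real.continuous_cos.continuousAt.eventually_ne hx
    have heq : deriv^[n] (fun y => (Real.cos y)⁻¹) =ᶠ[nhds x]
        fun y => (Real.cos y)⁻¹ * (Q n).eval (Real.tan y) :=
      hcont.mono fun y hy => ih y hy
    rw [heq.deriv_eq]
    have h1 : HasDerivAt (fun y => (Real.cos y)⁻¹)
        (-(-Real.sin x) / Real.cos x ^ 2) x := (Real.hasDerivAt_cos x).inv hx
    have h2 : HasDerivAt (fun y => (Q n).eval (Real.tan y))
        ((Polynomial.derivative (Q n)).eval (Real.tan x) * (1 / Real.cos x ^ 2)) x :=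
      ((Q n).hasDerivAt (Real.tan x)).comp x (Real.hasDerivAt_tan hx)
    rw [(h1.fun_mul h2).deriv]
    have hs := Real.sin_sq_add_cos_sq x
    simp only [Q, Polynomial.eval_add, Polynomial.eval_mul, Polynomial.eval_one,
      Polynomial.eval_pow, Polynomial.eval_X, Real.tan_eq_sin_div_cos]
    field_simp
    linear_combination (-(Polynomial.eval (Real.sin x / Real.cos x) (Polynomial.derivative (Q n)))) * hs
end
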